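/- As formal power series over the integers, (q^(δ) · Σ_{n≥0} p(n) q^n · Π_{n≥1}(1 - q^(Mn))^M) | U(M) = Σ_{n≥0} p(Mn + β) q^(n + (δ+β)/M) · Π_{n≥1}(1 - q^n)^M, whenever M is a positive integer, β is the least positive residue of the inverse of 24 mod M (assuming gcd(24,M)=1), δ ≡ -β (mod M), and (δ+β)/M is an integer. -/

import Mathlib

open PowerSeries

/-- The partition function `p(n)`. -/
noncomputable def partitionFn (n : ℕ) : ℕ := Fintype.card (Nat.Partition n)

/-- The generating function `Σ p(n) qⁿ` over `ℤ`. -/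
noncomputable def P : PowerSeries ℤ := PowerSeries.mk fun n => (partitionFn n : ℤ)

/-- The `U(M)` operator on formal power series: `(Σ a(n) qⁿ) | U(M) = Σ a(Mn) qⁿ`. -/
noncomputable def Uop (M : ℕ) (f : PowerSeries ℤ) : PowerSeries ℤ :=
  PowerSeries.mk fun n => PowerSeries.coeff (M * n) f

/-- The `V(j)` operator on formal power series: `(Σ a(n) qⁿ) | V(j) = Σ a(n) q^(jn)`. -/
noncomputable def Vop (j : ℕ) (f : PowerSeries ℤ) : PowerSeries ℤ :=
  PowerSeries.mk fun n => if j ∣ n then PowerSeries.coeff (n / j) f else 0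

lemma Uop_mul_Vop (M : ℕ) (hM : 0 < M) (f g : PowerSeries ℤ) :
    Uop M (f * Vop M g) = Uop M f * g := by
  ext n
  simp only [Uop, Vop, coeff_mk, coeff_mul, mul_ite, mul_zero]
  rw [← Finset.sum_filter]
  refine Finset.sum_nbij' (fun x => (x.1 / M, x.2 / M)) (fun y => (M * y.1, M * y.2))
    ?_ ?_ ?_ ?_ ?_
  · rintro ⟨a, b⟩ hx
    simp only [Finset.mem_filter, Finset.HasAntidiagonal.mem_antidiagonal] at hx ⊢
    obtain ⟨hab, c, rfl⟩ := hx
    have hdva : M ∣ a := by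
      have ha : a = M * n - M * c := by omega
      rw [ha]; exact Nat.dvd_sub (dvd_mul_right M n) (dvd_mul_right M c)
    obtain ⟨d, rfl⟩ := hdva
    rw [Nat.mul_div_cancel_left _ hM, Nat.mul_div_cancel_left _ hM]
    have : M * (d + c) = M * n := by rw [Nat.mul_add]; omega
    exact Nat.eq_of_mul_eq_mul_left hM this
  · rintro ⟨a, b⟩ hy
    simp only [Finset.HasAntidiagonal.mem_antidiagonal] at hy
    simp only [Finset.mem_filter, Finset.HasAntidiagonal.mem_antidiagonal]
    exact ⟨by rw [← Nat.mul_add, hy], ⟨b, rfl⟩⟩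
  · rintro ⟨a, b⟩ hx
    simp only [Finset.mem_filter, Finset.HasAntidiagonal.mem_antidiagonal] at hx
    obtain ⟨hab, c, rfl⟩ := hx
    have hdva : M ∣ a := by
      have ha : a = M * n - M * c := by omega
      rw [ha]; exact Nat.dvd_sub (dvd_mul_right M n) (dvd_mul_right M c)
    obtain ⟨d, rfl⟩ := hdva
    simp [Nat.mul_div_cancel_left _ hM]
  · rintro ⟨a, b⟩ _
    simp [Nat.mul_div_cancel_left _ hM]
  · rintro ⟨a, b⟩ hx
    simp only [Finset.mem_filter, Finset.HasAntidiagonal.mem_antidiagonal] at hx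
    obtain ⟨hab, c, rfl⟩ := hx
    have hdva : M ∣ a := by
      have ha : a = M * n - M * c := by omega
      rw [ha]; exact Nat.dvd_sub (dvd_mul_right M n) (dvd_mul_right M c)
    obtain ⟨d, rfl⟩ := hdva
    simp [Nat.mul_div_cancel_left _ hM]

lemma Uop_mul_Vop_pow (M : ℕ) (hM : 0 < M) (f g : PowerSeries ℤ) (k : ℕ) :
    Uop M (f * (Vop M g) ^ k) = Uop M f * g ^ k := by
  induction k with
  | zero => simp
  | succ k ih =>
      rw [pow_succ, ← mul_assoc, Uop_mul_Vop M hM, ih, pow_succ, mul_assoc]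

/-- With `E = Π_{n≥1}(1 - qⁿ)` (characterized by `E · Σ p(n)qⁿ = 1`), `M` coprime to `24`,
`β` the inverse of `24` mod `M` with `1 ≤ β ≤ M - 1`, and `δ + β = M·t`:
`(q^δ · Σ p(n)qⁿ · Π(1-q^{Mn})^M) | U(M) = Σ p(Mn+β) q^{n+t} · Π(1-qⁿ)^M`. -/
theorem U_shift_identity (M β δ t : ℕ) (hM : 0 < M) (hcop : Nat.Coprime 24 M)
    (hβ1 : 1 ≤ β) (hβ2 : β ≤ M - 1) (hβ : 24 * β ≡ 1 [MOD M])
    (ht : δ + β = M * t) (E : PowerSeries ℤ) (hE : E * P = 1) :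
    Uop M ((PowerSeries.X : PowerSeries ℤ) ^ δ * P * (Vop M E) ^ M) =
      (PowerSeries.X : PowerSeries ℤ) ^ t *
        (PowerSeries.mk fun n => (partitionFn (M * n + β) : ℤ)) * E ^ M := by
  have hM2 : 2 ≤ M := by omega
  rw [Uop_mul_Vop_pow M hM]
  have key : Uop M ((PowerSeries.X : PowerSeries ℤ) ^ δ * P) =
      (PowerSeries.X : PowerSeries ℤ) ^ t *
        (PowerSeries.mk fun n => (partitionFn (M * n + β) : ℤ)) := by
    ext n
    rw [mul_comm ((PowerSeries.X : PowerSeries ℤ) ^ δ) P,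
      mul_comm ((PowerSeries.X : PowerSeries ℤ) ^ t)]
    simp only [Uop, coeff_mk, coeff_mul_X_pow', P]
    by_cases h : t ≤ n
    · have h1 : M * (n - t) + M * t = M * n := by
        rw [← Nat.mul_add, Nat.sub_add_cancel h]
      have hδ : δ ≤ M * n := by omega
      rw [if_pos hδ, if_pos h]
      have : M * n - δ = M * (n - t) + β := by omega
      rw [this]
    · have hn : n ≤ t - 1 := by omega
      have h2 : M * n ≤ M * (t - 1) := Nat.mul_le_mul_left M hn
      have h3 : M * (t - 1) + M * 1 = M * t := by
        rw [← Nat.mul_add]; congr 1; omega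
      rw [if_neg (by omega), if_neg h]
  rw [key, mul_assoc]
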